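/- Adopt the Newton-step setup: n ≥ 1, H̃ ∈ ℝ^{n×n} symmetric positive semidefinite, λ > 0, Ω = [I, −I] ∈ ℝ^{n×2n}, vectors v, s ∈ ℝ^{2n} with all components positive, β = √(vs), τ > 0, and (Δz, Δv, Δs) satisfying 2λH̃Δz + ΩΔv = 0, ΩᵀΔz + Δs = 0, and √(s/v)Δv + √(v/s)Δs = 2(τe − √(vs)). Suppose ξ = ξ(β,τ) = ‖τe − β‖/τ < 1, let 0 < η < 1, τ₊ = (1 − η)τ, v₊ = v + Δv, s₊ = s + Δs, and β₊ = √(v₊ s₊). Then ξ(β₊, τ₊) ≤ ξ²/(1 + √(1 − ξ²)) + η√(2n)/(1 − η). -/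

import Mathlib

open Matrix Finset

set_option maxHeartbeats 1000000 in
/-- decrease of the proximity measure after one full Newton step with the
damped update `τ₊ = (1 − η)τ`:
`ξ(β₊, τ₊) ≤ ξ²/(1 + √(1 − ξ²)) + η√(2n)/(1 − η)`. -/
theorem proximity_after_newton_step {n : ℕ} (hn : 1 ≤ n)
    (Htil : Matrix (Fin n) (Fin n) ℝ) (hH : Htil.PosSemidef)
    (lam : ℝ) (hlam : 0 < lam)
    (Ω : Matrix (Fin n) (Fin n ⊕ Fin n) ℝ)
    (hΩ : Ω = Matrix.fromCols (1 : Matrix (Fin n) (Fin n) ℝ)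
      (-(1 : Matrix (Fin n) (Fin n) ℝ)))
    (v s : Fin n ⊕ Fin n → ℝ) (hv : ∀ i, 0 < v i) (hs : ∀ i, 0 < s i)
    (β : Fin n ⊕ Fin n → ℝ) (hβ : β = fun i => Real.sqrt (v i * s i))
    (τ : ℝ) (hτ : 0 < τ)
    (Δz : Fin n → ℝ) (Δv Δs : Fin n ⊕ Fin n → ℝ)
    (heq1 : (2 * lam) • Htil.mulVec Δz + Ω.mulVec Δv = 0)
    (heq2 : Ωᵀ.mulVec Δz + Δs = 0)
    (heq3 : ∀ i, Real.sqrt (s i / v i) * Δv i + Real.sqrt (v i / s i) * Δs i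
        = 2 * (τ - Real.sqrt (v i * s i)))
    (ξ : ℝ) (hξdef : ξ = Real.sqrt (∑ i, (τ - β i) ^ 2) / τ) (hξ : ξ < 1)
    (η : ℝ) (hη0 : 0 < η) (hη1 : η < 1)
    (τplus : ℝ) (hτplus : τplus = (1 - η) * τ)
    (vplus splus : Fin n ⊕ Fin n → ℝ)
    (hvplus : vplus = v + Δv) (hsplus : splus = s + Δs)
    (βplus : Fin n ⊕ Fin n → ℝ)
    (hβplus : βplus = fun i => Real.sqrt (vplus i * splus i)) :
    Real.sqrt (∑ i, (τplus - βplus i) ^ 2) / τplus ≤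
      ξ ^ 2 / (1 + Real.sqrt (1 - ξ ^ 2)) + η * Real.sqrt (2 * n) / (1 - η) := by
  have hη1' : (0:ℝ) < 1 - η := by linarith
  have hτplus_pos : 0 < τplus := by rw [hτplus]; positivity
  set a : Fin n ⊕ Fin n → ℝ := fun i => Real.sqrt (s i / v i) * Δv i with ha
  set b : Fin n ⊕ Fin n → ℝ := fun i => Real.sqrt (v i / s i) * Δs i with hb
  set q : Fin n ⊕ Fin n → ℝ := fun i => ((a i - b i) / 2) ^ 2 with hq
  have hq_nonneg : ∀ i, 0 ≤ q i := fun i => sq_nonneg _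
  have habs : ∀ i, a i + b i = 2 * (τ - β i) := by
    intro i; rw [hβ]; exact heq3 i
  have hβ2 : ∀ i, β i ^ 2 = v i * s i := by
    intro i; rw [hβ]; exact Real.sq_sqrt (mul_nonneg (hv i).le (hs i).le)
  have hβa : ∀ i, β i * a i = s i * Δv i := by
    intro i
    have h1 : Real.sqrt (v i * s i) * Real.sqrt (s i / v i) = s i := by
      rw [← Real.sqrt_mul (mul_nonneg (hv i).le (hs i).le)]
      have h2 : v i * s i * (s i / v i) = s i ^ 2 := by
        field_simp [(hv i).ne', (hs i).ne']
      rw [h2, Real.sqrt_sq (hs i).le]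
    rw [hβ]; simp only [ha]
    rw [← mul_assoc, h1]
  have hβb : ∀ i, β i * b i = v i * Δs i := by
    intro i
    have h1 : Real.sqrt (v i * s i) * Real.sqrt (v i / s i) = v i := by
      rw [← Real.sqrt_mul (mul_nonneg (hv i).le (hs i).le)]
      have h2 : v i * s i * (v i / s i) = v i ^ 2 := by
        field_simp [(hv i).ne', (hs i).ne']
      rw [h2, Real.sqrt_sq (hv i).le]
    rw [hβ]; simp only [hb]
    rw [← mul_assoc, h1]
  have hab2 : ∀ i, a i * b i = Δv i * Δs i := by
    intro i
    have h1 : Real.sqrt (s i / v i) * Real.sqrt (v i / s i) = 1 := by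
      rw [← Real.sqrt_mul (div_nonneg (hs i).le (hv i).le)]
      have h2 : s i / v i * (v i / s i) = 1 := by
        field_simp [(hv i).ne', (hs i).ne']
      rw [h2, Real.sqrt_one]
    simp only [ha, hb]
    calc Real.sqrt (s i / v i) * Δv i * (Real.sqrt (v i / s i) * Δs i)
        = (Real.sqrt (s i / v i) * Real.sqrt (v i / s i)) * (Δv i * Δs i) := by ring
      _ = Δv i * Δs i := by rw [h1, one_mul]
  -- key product identity
  have hprod : ∀ i, vplus i * splus i = τ ^ 2 - q i := by
    intro i
    rw [hvplus, hsplus]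
    simp only [Pi.add_apply, hq]
    linear_combination (-1) * hβ2 i - hβa i - hβb i - hab2 i
      + ((β i + (a i + b i) / 2 + τ) / 2) * habs i
  -- positivity of ∑ Δv Δs via PSD
  have hΔs : Δs = -(Ωᵀ.mulVec Δz) := by
    have h := heq2
    funext i
    have := congrFun h i
    simp only [Pi.add_apply, Pi.zero_apply, Pi.neg_apply] at this ⊢
    linarith
  have hΩv : Ω.mulVec Δv = -((2 * lam) • Htil.mulVec Δz) := by
    funext i
    have := congrFun heq1 i
    simp only [Pi.add_apply, Pi.zero_apply, Pi.neg_apply] at this ⊢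
    linarith
  have hdotsum : (0:ℝ) ≤ ∑ i, Δv i * Δs i := by
    have h1 : ∑ i, Δv i * Δs i = Δv ⬝ᵥ Δs := rfl
    have h2 : Δv ⬝ᵥ Δs = -(Δv ⬝ᵥ (Ωᵀ.mulVec Δz)) := by rw [hΔs, dotProduct_neg]
    have h3 : Δv ⬝ᵥ (Ωᵀ.mulVec Δz) = (Ω.mulVec Δv) ⬝ᵥ Δz := by
      rw [Matrix.dotProduct_mulVec, Matrix.vecMul_transpose]
    have h4 : (Ω.mulVec Δv) ⬝ᵥ Δz = -((2 * lam) * ((Htil.mulVec Δz) ⬝ᵥ Δz)) := by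
      rw [hΩv]; rw [neg_dotProduct, smul_dotProduct]; simp [smul_eq_mul]
    have h5 : 0 ≤ (Htil.mulVec Δz) ⬝ᵥ Δz := by
      have := hH.dotProduct_mulVec_nonneg Δz
      simpa [dotProduct_comm] using this
    rw [h1, h2, h3, h4]
    have : 0 ≤ (2 * lam) * ((Htil.mulVec Δz) ⬝ᵥ Δz) := by positivity
    linarith
  have hξ0 : 0 ≤ ξ := by rw [hξdef]; positivity
  have hSr : ∑ i, (τ - β i) ^ 2 = ξ ^ 2 * τ ^ 2 := by
    have hS0 : 0 ≤ ∑ i, (τ - β i) ^ 2 := by positivity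
    rw [hξdef, div_pow, Real.sq_sqrt hS0]
    field_simp
  have hq_eq : ∀ i, q i = (τ - β i) ^ 2 - a i * b i := by
    intro i
    simp only [hq]
    linear_combination (((a i + b i) / 2 + τ - β i) / 2) * habs i
  have hsum_q : ∑ i, q i ≤ ξ ^ 2 * τ ^ 2 := by
    have : ∑ i, q i = (∑ i, (τ - β i) ^ 2) - ∑ i, Δv i * Δs i := by
      rw [← Finset.sum_sub_distrib]
      exact Finset.sum_congr rfl fun i _ => by rw [hq_eq i, hab2 i]
    rw [this, hSr]; linarith
  have hq_le : ∀ i, q i ≤ ξ ^ 2 * τ ^ 2 := by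
    intro i
    exact le_trans (Finset.single_le_sum (fun j _ => hq_nonneg j) (mem_univ i)) hsum_q
  have hξ2le : ξ ^ 2 ≤ 1 := by nlinarith [hξ0, hξ]
  have hξττ : ξ ^ 2 * τ ^ 2 ≤ τ ^ 2 := by
    have hp : 0 ≤ (1 - ξ ^ 2) * τ ^ 2 := mul_nonneg (by linarith) (sq_nonneg τ)
    nlinarith [hp]
  have hτ2q : ∀ i, 0 ≤ τ ^ 2 - q i := by
    intro i
    have := hq_le i
    linarith
  set σ : ℝ := Real.sqrt (1 - ξ ^ 2) with hσ
  have hσ0 : 0 ≤ σ := Real.sqrt_nonneg _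
  have hβplus_eq : ∀ i, βplus i = Real.sqrt (τ ^ 2 - q i) := by
    intro i; rw [hβplus]; simp only; rw [hprod i]
  have hβplus_nonneg : ∀ i, 0 ≤ βplus i := by
    intro i; rw [hβplus_eq i]; exact Real.sqrt_nonneg _
  have hβplus_sq : ∀ i, βplus i ^ 2 = τ ^ 2 - q i := by
    intro i; rw [hβplus_eq i]; exact Real.sq_sqrt (hτ2q i)
  have hβplus_le : ∀ i, βplus i ≤ τ := by
    intro i
    rw [hβplus_eq i]
    calc Real.sqrt (τ ^ 2 - q i) ≤ Real.sqrt (τ ^ 2) :=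
          Real.sqrt_le_sqrt (by linarith [hq_nonneg i])
      _ = τ := Real.sqrt_sq hτ.le
  have hβplus_ge : ∀ i, τ * σ ≤ βplus i := by
    intro i
    rw [hβplus_eq i, hσ]
    have h1 : τ ^ 2 * (1 - ξ ^ 2) ≤ τ ^ 2 - q i := by linarith [hq_le i]
    calc τ * Real.sqrt (1 - ξ ^ 2)
        = Real.sqrt (τ ^ 2) * Real.sqrt (1 - ξ ^ 2) := by rw [Real.sqrt_sq hτ.le]
      _ = Real.sqrt (τ ^ 2 * (1 - ξ ^ 2)) := (Real.sqrt_mul (sq_nonneg τ) _).symm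
      _ ≤ Real.sqrt (τ ^ 2 - q i) := Real.sqrt_le_sqrt h1
  have hden_pos : 0 < τ * (1 + σ) := by positivity
  have hgap_nonneg : ∀ i, 0 ≤ τ - βplus i := fun i => by linarith [hβplus_le i]
  have hgap_le : ∀ i, τ - βplus i ≤ q i / (τ * (1 + σ)) := by
    intro i
    have hτβ : 0 < τ + βplus i := by have := hβplus_nonneg i; linarith
    have h1 : τ - βplus i = q i / (τ + βplus i) := by
      rw [eq_div_iff (ne_of_gt hτβ)]
      linear_combination (-1) * hβplus_sq i
    rw [h1]
    apply div_le_div_of_nonneg_left (hq_nonneg i) hden_pos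
    linarith [hβplus_ge i]
  -- bound on ‖τ e − β₊‖
  have hsum_gap : ∑ i, (τ - βplus i) ≤ ξ ^ 2 * τ / (1 + σ) := by
    calc ∑ i, (τ - βplus i) ≤ ∑ i, q i / (τ * (1 + σ)) :=
          Finset.sum_le_sum fun i _ => hgap_le i
      _ = (∑ i, q i) / (τ * (1 + σ)) := by rw [Finset.sum_div]
      _ ≤ (ξ ^ 2 * τ ^ 2) / (τ * (1 + σ)) := by
          apply div_le_div_of_nonneg_right hsum_q hden_pos.le
      _ = ξ ^ 2 * τ / (1 + σ) := by
          field_simp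
  have hC : Real.sqrt (∑ i, (τ - βplus i) ^ 2) ≤ ξ ^ 2 * τ / (1 + σ) := by
    have h1 : ∑ i, (τ - βplus i) ^ 2 ≤ (∑ i, (τ - βplus i)) ^ 2 := by
      have : ∀ i ∈ (univ : Finset (Fin n ⊕ Fin n)),
          (τ - βplus i) ^ 2 ≤ (τ - βplus i) * ∑ j, (τ - βplus j) := by
        intro i _
        rw [sq]
        exact mul_le_mul_of_nonneg_left
          (Finset.single_le_sum (fun j _ => hgap_nonneg j) (mem_univ i)) (hgap_nonneg i)
      calc ∑ i, (τ - βplus i) ^ 2 ≤ ∑ i, (τ - βplus i) * ∑ j, (τ - βplus j) :=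
            Finset.sum_le_sum this
        _ = (∑ i, (τ - βplus i)) ^ 2 := by rw [← Finset.sum_mul, sq]
    have h2 : 0 ≤ ∑ i, (τ - βplus i) := Finset.sum_nonneg fun i _ => hgap_nonneg i
    calc Real.sqrt (∑ i, (τ - βplus i) ^ 2)
        ≤ Real.sqrt ((∑ i, (τ - βplus i)) ^ 2) := Real.sqrt_le_sqrt h1
      _ = ∑ i, (τ - βplus i) := Real.sqrt_sq h2
      _ ≤ ξ ^ 2 * τ / (1 + σ) := hsum_gap
  -- Euclidean-space triangle inequality step
  set u : EuclideanSpace ℝ (Fin n ⊕ Fin n) := WithLp.toLp 2 (fun i => τ - βplus i) with hu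
  set w : EuclideanSpace ℝ (Fin n ⊕ Fin n) := WithLp.toLp 2 (fun i => βplus i) with hw
  have hunorm : ‖u‖ = Real.sqrt (∑ i, (τ - βplus i) ^ 2) := by
    rw [EuclideanSpace.norm_eq]
    congr 1
    exact Finset.sum_congr rfl fun i _ => by
      simp [hu, Real.norm_eq_abs, sq_abs]
  have hwnorm : ‖w‖ = Real.sqrt (∑ i, (βplus i) ^ 2) := by
    rw [EuclideanSpace.norm_eq]
    congr 1
    exact Finset.sum_congr rfl fun i _ => by
      simp [hw, Real.norm_eq_abs, sq_abs]
  have hwle : ‖w‖ ≤ Real.sqrt (2 * n) * τ := by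
    rw [hwnorm]
    have h1 : ∑ i, (βplus i) ^ 2 ≤ (2 * n : ℝ) * τ ^ 2 := by
      calc ∑ i, (βplus i) ^ 2 ≤ ∑ _i : Fin n ⊕ Fin n, τ ^ 2 :=
            Finset.sum_le_sum fun i _ => by
              nlinarith [hβplus_le i, hβplus_nonneg i]
        _ = (2 * n : ℝ) * τ ^ 2 := by
            rw [Finset.sum_const, Finset.card_univ, Fintype.card_sum, Fintype.card_fin,
              nsmul_eq_mul]
            push_cast
            ring
    calc Real.sqrt (∑ i, (βplus i) ^ 2) ≤ Real.sqrt ((2 * n : ℝ) * τ ^ 2) :=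
          Real.sqrt_le_sqrt h1
      _ = Real.sqrt (2 * n) * τ := by
          rw [Real.sqrt_mul (by positivity), Real.sqrt_sq hτ.le]
  have hXnorm : Real.sqrt (∑ i, (τplus - βplus i) ^ 2) = ‖(1 - η) • u - η • w‖ := by
    rw [EuclideanSpace.norm_eq]
    congr 1
    refine Finset.sum_congr rfl fun i _ => ?_
    have h1 : ((1 - η) • u - η • w) i = (1 - η) * (τ - βplus i) - η * βplus i := by
      simp [hu, hw, PiLp.sub_apply, PiLp.smul_apply, smul_eq_mul]
    rw [h1, Real.norm_eq_abs, sq_abs, hτplus]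
    ring
  have htri : ‖(1 - η) • u - η • w‖ ≤ (1 - η) * ‖u‖ + η * ‖w‖ := by
    calc ‖(1 - η) • u - η • w‖ ≤ ‖(1 - η) • u‖ + ‖η • w‖ := norm_sub_le _ _
      _ = (1 - η) * ‖u‖ + η * ‖w‖ := by
          rw [norm_smul, norm_smul, Real.norm_eq_abs, Real.norm_eq_abs,
            abs_of_pos hη1', abs_of_pos hη0]
  -- final assembly
  rw [div_le_iff₀ hτplus_pos, hXnorm]
  have hfinal : ((ξ ^ 2) / (1 + σ) + η * Real.sqrt (2 * n) / (1 - η)) * τplus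
      = (1 - η) * (ξ ^ 2 * τ / (1 + σ)) + η * (Real.sqrt (2 * n) * τ) := by
    rw [hτplus]
    have h1σ : (0:ℝ) < 1 + σ := by linarith
    field_simp
  rw [hfinal]
  have h1 : (1 - η) * ‖u‖ ≤ (1 - η) * (ξ ^ 2 * τ / (1 + σ)) := by
    apply mul_le_mul_of_nonneg_left _ hη1'.le
    rw [hunorm]; exact hC
  have h2 : η * ‖w‖ ≤ η * (Real.sqrt (2 * n) * τ) :=
    mul_le_mul_of_nonneg_left hwle hη0.le
  linarith [htri]
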